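/- (Key merging inequality.) Let P and Q be disjoint nonempty coalitions, and let j ∈ P ∪ Q be a player whose number of samples n_j is maximal among all players of P ∪ Q, with P ∪ Q containing at least two players. Then costw(Q) + costw(P) ≥ costw((Q ∪ P) \ {j}) + costw({j}), i.e., merging the two groups and removing a largest player to local learning does not increase total cost. -/

import Mathlib

open Finset

variable {ι : Type*}

/-- The expected error of player `j` in coalition `C`. -/
noncomputable def err [DecidableEq ι] (μ σ2 : ℝ) (n : ι → ℕ) (C : Finset ι) (j : ι) : ℝ :=
  μ / (∑ i ∈ C, (n i : ℝ)) +
    σ2 * ((∑ i ∈ C.erase j, (n i : ℝ) ^ 2) + (∑ i ∈ C.erase j, (n i : ℝ)) ^ 2) /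
      (∑ i ∈ C, (n i : ℝ)) ^ 2

/-- The weighted cost of a coalition `C`. -/
noncomputable def costw [DecidableEq ι] (μ σ2 : ℝ) (n : ι → ℕ) (C : Finset ι) : ℝ :=
  ∑ j ∈ C, (n j : ℝ) * err μ σ2 n C j

lemma costw_eq [DecidableEq ι] (μ σ2 : ℝ) (n : ι → ℕ) (hn : ∀ i, 0 < n i)
    (C : Finset ι) (hC : C.Nonempty) :
    costw μ σ2 n C = μ + σ2 * (((∑ i ∈ C, (n i : ℝ))^2 - ∑ i ∈ C, (n i : ℝ)^2)
      / (∑ i ∈ C, (n i : ℝ))) := by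
  have hS : 0 < ∑ i ∈ C, (n i : ℝ) :=
    Finset.sum_pos (fun i _ => by exact_mod_cast hn i) hC
  set S := ∑ i ∈ C, (n i : ℝ) with hSdef
  set T := ∑ i ∈ C, (n i : ℝ)^2 with hTdef
  have key : ∀ j ∈ C, (n j : ℝ) * err μ σ2 n C j
      = μ * (n j) / S + σ2 * ((n j : ℝ) * (T + S^2) - 2 * S * (n j)^2) / S^2 := by
    intro j hj
    rw [err, Finset.sum_erase_eq_sub hj, Finset.sum_erase_eq_sub hj, ← hSdef, ← hTdef]
    field_simp
    ring
  rw [costw, Finset.sum_congr rfl key, Finset.sum_add_distrib]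
  have h1 : ∑ j ∈ C, μ * (n j : ℝ) / S = μ := by
    rw [← Finset.sum_div, ← Finset.mul_sum, ← hSdef, mul_div_assoc, div_self hS.ne', mul_one]
  have inner : (∑ j ∈ C, ((n j : ℝ) * (T + S^2) - 2 * S * (n j)^2))
      = S * (T + S^2) - 2 * S * T := by
    rw [Finset.sum_sub_distrib, ← Finset.sum_mul, ← Finset.mul_sum, ← hSdef, ← hTdef]
  have h2 : ∑ j ∈ C, σ2 * ((n j : ℝ) * (T + S^2) - 2 * S * (n j)^2) / S^2
      = σ2 * ((S^2 - T) / S) := by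
    rw [← Finset.sum_div, ← Finset.mul_sum, inner]
    field_simp
    ring
  rw [h1, h2]

lemma costw_single [DecidableEq ι] (μ σ2 : ℝ) (n : ι → ℕ) (hn : ∀ i, 0 < n i) (j : ι) :
    costw μ σ2 n {j} = μ := by
  have hj0 : (n j : ℝ) ≠ 0 := by
    have := hn j; positivity
  simp [costw, err, hj0]
  field_simp

lemma sq_sum_le [DecidableEq ι] (n : ι → ℕ) (C : Finset ι) (M : ℝ)
    (hM : ∀ i ∈ C, (n i : ℝ) ≤ M) :
    ∑ i ∈ C, (n i : ℝ)^2 ≤ M * ∑ i ∈ C, (n i : ℝ) := by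
  rw [Finset.mul_sum]
  apply Finset.sum_le_sum
  intro i hi
  have h0 : (0:ℝ) ≤ (n i : ℝ) := by positivity
  nlinarith [hM i hi]

lemma core_ineq (a b A B m : ℝ) (ha : 0 < a) (hb : 0 < b) (hm : 0 < m)
    (hma : m ≤ a) (hA1 : m^2 ≤ A) (hA2 : A ≤ m*a) (hB1 : B ≤ m*b) (hB2 : B ≤ b^2) :
    ((b+a-m)^2 - (B+A-m^2)) * (b*a) ≤ ((b^2-B)*a + (a^2-A)*b) * (b+a-m) := by
  rcases le_total m b with h | h
  · nlinarith [mul_nonneg (mul_nonneg (sub_nonneg.2 hA2) hb.le) (sub_nonneg.2 h),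
      mul_nonneg (mul_nonneg (sub_nonneg.2 hB1) ha.le) (sub_nonneg.2 hma)]
  · nlinarith [mul_nonneg (mul_nonneg (sub_nonneg.2 hA1) hb.le) (sub_nonneg.2 h),
      mul_nonneg (mul_nonneg (sub_nonneg.2 hB2) ha.le) (sub_nonneg.2 hma),
      mul_nonneg (mul_nonneg hb.le (sq_nonneg (a-m))) (sub_nonneg.2 h)]

/-- (Key merging inequality.)  Let `P` and `Q` be disjoint nonempty coalitions and let
`j ∈ P ∪ Q` have a maximal number of samples among the players of `P ∪ Q`, with
`P ∪ Q` containing at least two players.  Then merging the two groups and removing `j`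
to local learning does not increase total cost:
`costw Q + costw P ≥ costw ((Q ∪ P) \ {j}) + costw {j}`. -/
theorem merge_and_remove_largest [DecidableEq ι] (μ σ2 : ℝ) (n : ι → ℕ)
    (hμ : 0 < μ) (hσ : 0 < σ2) (hn : ∀ i, 0 < n i)
    (P Q : Finset ι) (hP : P.Nonempty) (hQ : Q.Nonempty) (hdisj : Disjoint P Q)
    (j : ι) (hj : j ∈ P ∪ Q) (hjmax : ∀ i ∈ P ∪ Q, n i ≤ n j)
    (hcard : 2 ≤ (P ∪ Q).card) :
    costw μ σ2 n Q + costw μ σ2 n P ≥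
      costw μ σ2 n ((Q ∪ P).erase j) + costw μ σ2 n {j} := by
  set a := ∑ i ∈ P, (n i : ℝ) with hadef
  set b := ∑ i ∈ Q, (n i : ℝ) with hbdef
  set A := ∑ i ∈ P, (n i : ℝ)^2 with hAdef
  set B := ∑ i ∈ Q, (n i : ℝ)^2 with hBdef
  set m := (n j : ℝ) with hmdef
  have ha : 0 < a := Finset.sum_pos (fun i _ => by exact_mod_cast hn i) hP
  have hb : 0 < b := Finset.sum_pos (fun i _ => by exact_mod_cast hn i) hQ
  have hm : 0 < m := by simp only [hmdef]; exact_mod_cast hn j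
  have hj' : j ∈ Q ∪ P := by rwa [Finset.union_comm]
  -- the merged-minus-j coalition is nonempty
  have hRne : ((Q ∪ P).erase j).Nonempty := by
    rw [← Finset.card_pos, Finset.card_erase_of_mem hj']
    rw [Finset.union_comm] at hcard
    omega
  have hsumU : ∑ i ∈ Q ∪ P, (n i : ℝ) = b + a := Finset.sum_union hdisj.symm
  have hsumU2 : ∑ i ∈ Q ∪ P, (n i : ℝ)^2 = B + A := Finset.sum_union hdisj.symm
  have hsumR : ∑ i ∈ (Q ∪ P).erase j, (n i : ℝ) = b + a - m := by
    rw [Finset.sum_erase_eq_sub hj', hsumU]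
  have hsumR2 : ∑ i ∈ (Q ∪ P).erase j, (n i : ℝ)^2 = B + A - m^2 := by
    rw [Finset.sum_erase_eq_sub hj', hsumU2]
  have hsm : 0 < b + a - m := by
    rw [← hsumR]
    exact Finset.sum_pos (fun i _ => by exact_mod_cast hn i) hRne
  -- bounds
  have hmax : ∀ i ∈ P ∪ Q, (n i : ℝ) ≤ m := fun i hi => by simp only [hmdef]; exact_mod_cast hjmax i hi
  have hA2 : A ≤ m * a :=
    sq_sum_le n P m (fun i hi => hmax i (Finset.mem_union_left _ hi))
  have hB1 : B ≤ m * b :=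
    sq_sum_le n Q m (fun i hi => hmax i (Finset.mem_union_right _ hi))
  have hB2 : B ≤ b^2 := by
    have := sq_sum_le n Q b (fun i hi =>
      Finset.single_le_sum (f := fun i => (n i : ℝ)) (fun k _ => by positivity) hi)
    nlinarith
  have hA2sq : A ≤ a^2 := by
    have := sq_sum_le n P a (fun i hi =>
      Finset.single_le_sum (f := fun i => (n i : ℝ)) (fun k _ => by positivity) hi)
    nlinarith
  -- the key polynomial inequality
  have key : ((b+a-m)^2 - (B+A-m^2)) * (b*a) ≤ ((b^2-B)*a + (a^2-A)*b) * (b+a-m) := by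
    rcases Finset.mem_union.1 hj with hjP | hjQ
    · have hma : m ≤ a :=
        Finset.single_le_sum (f := fun i => (n i : ℝ)) (fun k _ => by positivity) hjP
      have hA1 : m^2 ≤ A :=
        Finset.single_le_sum (f := fun i => (n i : ℝ)^2) (fun k _ => by positivity) hjP
      exact core_ineq a b A B m ha hb hm hma hA1 hA2 hB1 hB2
    · have hmb : m ≤ b :=
        Finset.single_le_sum (f := fun i => (n i : ℝ)) (fun k _ => by positivity) hjQ
      have hB1' : m^2 ≤ B :=
        Finset.single_le_sum (f := fun i => (n i : ℝ)^2) (fun k _ => by positivity) hjQ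
      have := core_ineq b a B A m hb ha hm hmb hB1' hB1 hA2 hA2sq
      linear_combination this
  have keydiv : ((b+a-m)^2 - (B+A-m^2)) / (b+a-m) ≤ (b^2-B)/b + (a^2-A)/a := by
    rw [div_add_div _ _ hb.ne' ha.ne', div_le_div_iff₀ hsm (mul_pos hb ha)]
    linear_combination key
  rw [costw_eq μ σ2 n hn Q hQ, costw_eq μ σ2 n hn P hP,
    costw_eq μ σ2 n hn ((Q ∪ P).erase j) hRne, costw_single μ σ2 n hn j,
    hsumR, hsumR2]
  have := mul_le_mul_of_nonneg_left keydiv hσ.le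
  linarith
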